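/- arXiv:2502.08831 — 3 statements merged into one kernel-verified Lean document; each statement's English description precedes it below -/
import Mathlib

section
/- Cauchy interlacing for a principal block: if H is an n×n Hermitian matrix and A is the m×m leading principal submatrix, then the eigenvalues λ₁ ≥ ... ≥ λ_n of H and μ₁ ≥ ... ≥ μ_m of A satisfy λ_k ≥ μ_k ≥ λ_{n−m+k} for all k = 1,...,m. -/
open Matrix

/-- The `k`-th largest value of a tuple `f : Fin n → ℝ`. -/
noncomputable def descSort {n : ℕ} (f : Fin n → ℝ) : Fin n → ℝ :=
  fun k => (f ∘ Tuple.sort f) k.rev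


section CauchyAux
open Submodule Module
open scoped InnerProductSpace


variable {N : ℕ}

lemma coeff_zero (b : OrthonormalBasis (Fin N) ℂ (EuclideanSpace ℂ (Fin N))) (s : Finset (Fin N))
    {x : EuclideanSpace ℂ (Fin N)} (hx : x ∈ span ℂ (⇑b '' ↑s)) {j : Fin N} (hj : j ∉ s) :
    ⟪b j, x⟫_ℂ = 0 := by
  have hle : span ℂ (⇑b '' ↑s) ≤ LinearMap.ker ((innerSL ℂ (b j)) : EuclideanSpace ℂ (Fin N) →ₗ[ℂ] ℂ) := by
    rw [span_le]
    rintro _ ⟨i, hi, rfl⟩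
    simp only [SetLike.mem_coe, LinearMap.mem_ker, ContinuousLinearMap.coe_coe, innerSL_apply_apply]
    exact b.orthonormal.2 (fun h => hj (h ▸ hi))
  simpa using hle hx

lemma quad_repr (T : EuclideanSpace ℂ (Fin N) →ₗ[ℂ] EuclideanSpace ℂ (Fin N)) (hT : T.IsSymmetric)
    (b : OrthonormalBasis (Fin N) ℂ (EuclideanSpace ℂ (Fin N))) (d : Fin N → ℝ)
    (hbd : ∀ i, T (b i) = (d i : ℂ) • b i) (x : EuclideanSpace ℂ (Fin N)) :
    RCLike.re ⟪x, T x⟫_ℂ = ∑ i, d i * ‖⟪b i, x⟫_ℂ‖ ^ 2 := by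
  have h1 : ⟪x, T x⟫_ℂ = ∑ i, ⟪x, b i⟫_ℂ * ⟪b i, T x⟫_ℂ :=
    (b.sum_inner_mul_inner x (T x)).symm
  have h2 : ∀ i ∈ Finset.univ, RCLike.re (⟪x, b i⟫_ℂ * ⟪b i, T x⟫_ℂ) = d i * ‖⟪b i, x⟫_ℂ‖ ^ 2 := by
    intro i _
    have hT' : ⟪b i, T x⟫_ℂ = (d i : ℂ) * ⟪b i, x⟫_ℂ := by
      rw [← hT (b i) x, hbd i, inner_smul_left]
      simp
    have hcz : ⟪x, b i⟫_ℂ = (starRingEnd ℂ) ⟪b i, x⟫_ℂ := (inner_conj_symm _ _).symm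
    rw [hT', hcz, mul_left_comm, RCLike.conj_mul]
    simp [← Complex.ofReal_pow]
  rw [h1, map_sum, Finset.sum_congr rfl h2]

lemma norm_sq_repr (b : OrthonormalBasis (Fin N) ℂ (EuclideanSpace ℂ (Fin N)))
    (x : EuclideanSpace ℂ (Fin N)) :
    ‖x‖ ^ 2 = ∑ i, ‖⟪b i, x⟫_ℂ‖ ^ 2 := by
  have h1 : ⟪x, x⟫_ℂ = ∑ i, ⟪x, b i⟫_ℂ * ⟪b i, x⟫_ℂ := (b.sum_inner_mul_inner x x).symm
  have h2 : ∀ i ∈ Finset.univ, RCLike.re (⟪x, b i⟫_ℂ * ⟪b i, x⟫_ℂ) = ‖⟪b i, x⟫_ℂ‖ ^ 2 := by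
    intro i _
    have hcz : ⟪x, b i⟫_ℂ = (starRingEnd ℂ) ⟪b i, x⟫_ℂ := (inner_conj_symm _ _).symm
    rw [hcz, RCLike.conj_mul]
    simp [← Complex.ofReal_pow]
  have := congrArg RCLike.re h1
  rw [inner_self_eq_norm_sq] at this
  rw [this, map_sum, Finset.sum_congr rfl h2]

lemma quad_le (T : EuclideanSpace ℂ (Fin N) →ₗ[ℂ] EuclideanSpace ℂ (Fin N)) (hT : T.IsSymmetric)
    (b : OrthonormalBasis (Fin N) ℂ (EuclideanSpace ℂ (Fin N))) (d : Fin N → ℝ)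
    (hbd : ∀ i, T (b i) = (d i : ℂ) • b i) (s : Finset (Fin N)) (c : ℝ)
    (hc : ∀ i ∈ s, d i ≤ c) {x : EuclideanSpace ℂ (Fin N)} (hx : x ∈ span ℂ (⇑b '' ↑s)) :
    RCLike.re ⟪x, T x⟫_ℂ ≤ c * ‖x‖ ^ 2 := by
  rw [quad_repr T hT b d hbd x, norm_sq_repr b x, Finset.mul_sum]
  apply Finset.sum_le_sum
  intro i _
  by_cases hi : i ∈ s
  · exact mul_le_mul_of_nonneg_right (hc i hi) (by positivity)
  · rw [coeff_zero b s hx hi]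
    simp

lemma quad_ge (T : EuclideanSpace ℂ (Fin N) →ₗ[ℂ] EuclideanSpace ℂ (Fin N)) (hT : T.IsSymmetric)
    (b : OrthonormalBasis (Fin N) ℂ (EuclideanSpace ℂ (Fin N))) (d : Fin N → ℝ)
    (hbd : ∀ i, T (b i) = (d i : ℂ) • b i) (s : Finset (Fin N)) (c : ℝ)
    (hc : ∀ i ∈ s, c ≤ d i) {x : EuclideanSpace ℂ (Fin N)} (hx : x ∈ span ℂ (⇑b '' ↑s)) :
    c * ‖x‖ ^ 2 ≤ RCLike.re ⟪x, T x⟫_ℂ := by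
  rw [quad_repr T hT b d hbd x, norm_sq_repr b x, Finset.mul_sum]
  apply Finset.sum_le_sum
  intro i _
  by_cases hi : i ∈ s
  · exact mul_le_mul_of_nonneg_right (hc i hi) (by positivity)
  · rw [coeff_zero b s hx hi]
    simp

lemma exists_ne_zero_mem_inf (S T : Submodule ℂ (EuclideanSpace ℂ (Fin N)))
    (h : N < finrank ℂ S + finrank ℂ T) : ∃ x, x ≠ 0 ∧ x ∈ S ∧ x ∈ T := by
  by_contra hcon
  push_neg at hcon
  have hbot : S ⊓ T = ⊥ := by
    rw [eq_bot_iff]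
    intro x hx
    rcases Submodule.mem_inf.mp hx with ⟨h1, h2⟩
    by_cases hx0 : x = 0
    · simp [hx0]
    · exact absurd (hcon x hx0 h1) (fun _ => (hcon x hx0 h1 h2).elim)
  have heq := Submodule.finrank_sup_add_finrank_inf_eq S T
  rw [hbot, finrank_bot, add_zero] at heq
  have h2 : finrank ℂ ↥(S ⊔ T) ≤ N := by
    simpa [finrank_euclideanSpace_fin] using Submodule.finrank_le (S ⊔ T)
  omega

lemma finrank_span_onb (b : OrthonormalBasis (Fin N) ℂ (EuclideanSpace ℂ (Fin N)))
    (s : Finset (Fin N)) : finrank ℂ (span ℂ (⇑b '' ↑s)) = s.card := by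
  rw [Set.image_eq_range]
  have h1 : LinearIndependent ℂ (fun i : ↥(↑s : Set (Fin N)) => b ↑i) :=
    b.orthonormal.linearIndependent.comp _ Subtype.coe_injective
  rw [finrank_span_eq_card h1]
  simp

variable {m n : ℕ}

noncomputable def embed (hm : m ≤ n) :
    EuclideanSpace ℂ (Fin m) →ₗ[ℂ] EuclideanSpace ℂ (Fin n) where
  toFun y := WithLp.toLp 2 (fun i : Fin n => if h : (i : ℕ) < m then y ⟨i, h⟩ else 0)
  map_add' y z := by
    ext i
    by_cases h : (i : ℕ) < m <;> simp [h]
  map_smul' c y := by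
    ext i
    by_cases h : (i : ℕ) < m <;> simp [h]

lemma embed_apply_lt (hm : m ≤ n) (y : EuclideanSpace ℂ (Fin m)) (j : Fin m) :
    embed hm y (Fin.castLE hm j) = y j := by
  simp [embed, Fin.castLE]

lemma embed_apply_ge (hm : m ≤ n) (y : EuclideanSpace ℂ (Fin m)) (i : Fin n)
    (hi : ¬ (i : ℕ) < m) : embed hm y i = 0 := by
  simp [embed, hi]

lemma embed_injective (hm : m ≤ n) : Function.Injective (embed hm) := by
  intro y z h
  ext j
  have := congrFun (congrArg (fun v => (WithLp.ofLp v : Fin n → ℂ)) h) (Fin.castLE hm j)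
  simpa [embed_apply_lt] using this

lemma sum_embed_support (hm : m ≤ n) (f : Fin n → ℂ)
    (hf : ∀ i : Fin n, ¬ (i : ℕ) < m → f i = 0) :
    ∑ i, f i = ∑ j : Fin m, f (Fin.castLE hm j) := by
  classical
  have hinj := Fin.castLE_injective hm
  rw [← Finset.sum_image (fun a _ b _ h => hinj h)]
  apply (Finset.sum_subset (Finset.subset_univ _) _).symm
  intro x _ hx
  apply hf
  intro hlt
  exact hx (Finset.mem_image.mpr ⟨⟨x, hlt⟩, Finset.mem_univ _, Fin.ext rfl⟩)

lemma embed_inner (hm : m ≤ n) (y z : EuclideanSpace ℂ (Fin m)) :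
    ⟪embed hm y, embed hm z⟫_ℂ = ⟪y, z⟫_ℂ := by
  rw [PiLp.inner_apply, PiLp.inner_apply]
  rw [sum_embed_support hm _ (fun i hi => by simp [embed_apply_ge hm _ _ hi])]
  exact Finset.sum_congr rfl fun j _ => by rw [embed_apply_lt, embed_apply_lt]

lemma embed_norm_sq (hm : m ≤ n) (y : EuclideanSpace ℂ (Fin m)) :
    ‖embed hm y‖ ^ 2 = ‖y‖ ^ 2 := by
  rw [← inner_self_eq_norm_sq (𝕜 := ℂ), ← inner_self_eq_norm_sq (𝕜 := ℂ), embed_inner]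

lemma embed_quad (hm : m ≤ n) (H : Matrix (Fin n) (Fin n) ℂ) (A : Matrix (Fin m) (Fin m) ℂ)
    (hA : A = H.submatrix (Fin.castLE hm) (Fin.castLE hm)) (y : EuclideanSpace ℂ (Fin m)) :
    ⟪embed hm y, Matrix.toEuclideanLin H (embed hm y)⟫_ℂ = ⟪y, Matrix.toEuclideanLin A y⟫_ℂ := by
  rw [PiLp.inner_apply, PiLp.inner_apply]
  have hTe : ∀ (N : ℕ) (M : Matrix (Fin N) (Fin N) ℂ) (v : EuclideanSpace ℂ (Fin N)) (i : Fin N),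
      (Matrix.toEuclideanLin M v) i = ∑ l, M i l * v l := by
    intro N M v i
    rw [Matrix.toEuclideanLin_apply]
    simp [Matrix.mulVec, dotProduct]
  have hz : ∀ i : Fin n, ¬ (i : ℕ) < m →
      ⟪embed hm y i, (Matrix.toEuclideanLin H (embed hm y)) i⟫_ℂ = 0 := by
    intro i hi
    rw [embed_apply_ge hm _ _ hi]
    simp
  rw [sum_embed_support hm _ hz]
  apply Finset.sum_congr rfl
  intro j _
  rw [embed_apply_lt]
  congr 1
  rw [hTe, hTe]
  rw [sum_embed_support hm _ (fun l hl => by rw [embed_apply_ge hm _ _ hl, mul_zero])]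
  apply Finset.sum_congr rfl
  intro l _
  rw [embed_apply_lt, hA]
  simp

lemma toEuclideanLin_eig {N : ℕ} (H : Matrix (Fin N) (Fin N) ℂ) (hH : H.IsHermitian) (j : Fin N) :
    Matrix.toEuclideanLin H (hH.eigenvectorBasis j) =
      ((hH.eigenvalues j : ℝ) : ℂ) • hH.eigenvectorBasis j := by
  apply (WithLp.equiv 2 (Fin N → ℂ)).injective
  ext i
  have := congrFun (hH.mulVec_eigenvectorBasis j) i
  simpa [Matrix.toEuclideanLin_apply, Complex.real_smul] using this


noncomputable def descPerm {n : ℕ} (f : Fin n → ℝ) : Equiv.Perm (Fin n) :=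
  Fin.revPerm.trans (Tuple.sort f)

lemma descSort_eq {n : ℕ} (f : Fin n → ℝ) (k : Fin n) :
    descSort f k = f (descPerm f k) := rfl

lemma descSort_anti {n : ℕ} (f : Fin n → ℝ) {i j : Fin n} (h : i ≤ j) :
    descSort f j ≤ descSort f i :=
  Tuple.monotone_sort f (Fin.rev_le_rev.mpr h)

noncomputable def descBasis {N : ℕ} {H : Matrix (Fin N) (Fin N) ℂ} (hH : H.IsHermitian) :
    OrthonormalBasis (Fin N) ℂ (EuclideanSpace ℂ (Fin N)) :=
  hH.eigenvectorBasis.reindex (descPerm hH.eigenvalues).symm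

lemma descBasis_eig {N : ℕ} {H : Matrix (Fin N) (Fin N) ℂ} (hH : H.IsHermitian) (k : Fin N) :
    Matrix.toEuclideanLin H (descBasis hH k) =
      ((descSort hH.eigenvalues k : ℝ) : ℂ) • descBasis hH k := by
  rw [descBasis, OrthonormalBasis.reindex_apply, Equiv.symm_symm, descSort_eq]
  exact toEuclideanLin_eig H hH _

end CauchyAux

open Submodule Module in
open scoped InnerProductSpace in
/-- Cauchy interlacing for a leading principal block: if `H` is an `n×n` Hermitian
matrix and `A` its leading `m×m` principal submatrix (`m ≤ n`), with eigenvalues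
`λ₁ ≥ ... ≥ λ_n` of `H` and `μ₁ ≥ ... ≥ μ_m` of `A` listed in descending order with
multiplicity, then `λ_k ≥ μ_k ≥ λ_{n−m+k}` for all `k = 1,...,m` (0-indexed below). -/
theorem cauchy_interlacing_leading_principal_submatrix
    (n m : ℕ) (hm : m ≤ n) (H : Matrix (Fin n) (Fin n) ℂ) (hH : H.IsHermitian)
    (A : Matrix (Fin m) (Fin m) ℂ)
    (hA : A = H.submatrix (Fin.castLE hm) (Fin.castLE hm))
    (hAH : A.IsHermitian) :
    ∀ k : Fin m,
      descSort hAH.eigenvalues k ≤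
        descSort hH.eigenvalues ⟨(k : ℕ), lt_of_lt_of_le k.isLt hm⟩ ∧
      descSort hH.eigenvalues ⟨n - m + (k : ℕ), by have := k.isLt; omega⟩ ≤
        descSort hAH.eigenvalues k := by
  intro k
  classical
  set TH := Matrix.toEuclideanLin H with hTH
  set TA := Matrix.toEuclideanLin A with hTAdef
  have hTHsym : TH.IsSymmetric := isHermitian_iff_isSymmetric.mp hH
  have hTAsym : TA.IsSymmetric := isHermitian_iff_isSymmetric.mp hAH
  set wB := descBasis hH with hwBdef
  set vB := descBasis hAH with hvBdef
  set dH := descSort hH.eigenvalues with hdH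
  set dA := descSort hAH.eigenvalues with hdA
  have hwB : ∀ i, TH (wB i) = ((dH i : ℝ) : ℂ) • wB i := descBasis_eig hH
  have hvB : ∀ i, TA (vB i) = ((dA i : ℝ) : ℂ) • vB i := descBasis_eig hAH
  set k' : Fin n := ⟨(k : ℕ), lt_of_lt_of_le k.isLt hm⟩ with hk'
  set j' : Fin n := ⟨n - m + (k : ℕ), by have := k.isLt; omega⟩ with hj'
  have hinj := embed_injective hm
  -- common quadratic form transfer
  have key : ∀ (y : EuclideanSpace ℂ (Fin m)),
      RCLike.re ⟪embed hm y, TH (embed hm y)⟫_ℂ = RCLike.re ⟪y, TA y⟫_ℂ := by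
    intro y
    rw [hTH, hTAdef, embed_quad hm H A hA y]
  constructor
  · -- μ'_k ≤ λ'_k
    set SA := Submodule.map (embed hm) (span ℂ (⇑vB '' ↑(Finset.Iic k))) with hSA
    set SH := span ℂ (⇑wB '' ↑(Finset.Ici k')) with hSH
    have hrA : finrank ℂ SA = (k : ℕ) + 1 := by
      rw [hSA, ← LinearEquiv.finrank_eq (Submodule.equivMapOfInjective _ hinj _),
        finrank_span_onb, Fin.card_Iic]
    have hrH : finrank ℂ SH = n - (k : ℕ) := by
      rw [hSH, finrank_span_onb, Fin.card_Ici]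
    obtain ⟨x, hx0, hxA, hxH⟩ := exists_ne_zero_mem_inf SA SH (by
      rw [hrA, hrH]
      have := k'.isLt
      omega)
    obtain ⟨y, hy, rfl⟩ := hxA
    have hub : RCLike.re ⟪embed hm y, TH (embed hm y)⟫_ℂ ≤ dH k' * ‖embed hm y‖ ^ 2 :=
      quad_le TH hTHsym wB dH hwB (Finset.Ici k') (dH k')
        (fun i hi => descSort_anti _ (Finset.mem_Ici.mp hi)) hxH
    have hlb : dA k * ‖y‖ ^ 2 ≤ RCLike.re ⟪y, TA y⟫_ℂ :=
      quad_ge TA hTAsym vB dA hvB (Finset.Iic k) (dA k)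
        (fun i hi => descSort_anti _ (Finset.mem_Iic.mp hi)) hy
    rw [← key y, ← embed_norm_sq hm y] at hlb
    have hpos : (0 : ℝ) < ‖embed hm y‖ ^ 2 := pow_pos (norm_pos_iff.mpr hx0) 2
    exact (mul_le_mul_iff_of_pos_right hpos).mp (le_trans hlb hub)
  · -- λ'_{n-m+k} ≤ μ'_k
    set SH := span ℂ (⇑wB '' ↑(Finset.Iic j')) with hSH
    set SA := Submodule.map (embed hm) (span ℂ (⇑vB '' ↑(Finset.Ici k))) with hSA
    have hrH : finrank ℂ SH = (n - m + (k : ℕ)) + 1 := by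
      rw [hSH, finrank_span_onb, Fin.card_Iic]
    have hrA : finrank ℂ SA = m - (k : ℕ) := by
      rw [hSA, ← LinearEquiv.finrank_eq (Submodule.equivMapOfInjective _ hinj _),
        finrank_span_onb, Fin.card_Ici]
    obtain ⟨x, hx0, hxH, hxA⟩ := exists_ne_zero_mem_inf SH SA (by
      rw [hrA, hrH]
      have := k.isLt
      omega)
    obtain ⟨y, hy, rfl⟩ := hxA
    have hlb : dH j' * ‖embed hm y‖ ^ 2 ≤ RCLike.re ⟪embed hm y, TH (embed hm y)⟫_ℂ :=
      quad_ge TH hTHsym wB dH hwB (Finset.Iic j') (dH j')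
        (fun i hi => descSort_anti _ (Finset.mem_Iic.mp hi)) hxH
    have hub : RCLike.re ⟪y, TA y⟫_ℂ ≤ dA k * ‖y‖ ^ 2 :=
      quad_le TA hTAsym vB dA hvB (Finset.Ici k) (dA k)
        (fun i hi => descSort_anti _ (Finset.mem_Ici.mp hi)) hy
    rw [← key y, ← embed_norm_sq hm y] at hub
    have hpos : (0 : ℝ) < ‖embed hm y‖ ^ 2 := pow_pos (norm_pos_iff.mpr hx0) 2
    exact (mul_le_mul_iff_of_pos_right hpos).mp (le_trans hlb hub)
end

section
/- For each integer n ≥ 1 and κT > 0 with n < κT/π + 1/2, there exists exactly one solution C of tan(CκT) = 2C/(C²−1) in the open interval ((2n−1)π/(2κT), nπ/(κT)) with 0 ≤ C < 1. -/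
open Real

set_option maxHeartbeats 1000000 in
/-- For each integer `n ≥ 1` with `n < κT/π + 1/2` (and `κ, T > 0`), there exists
exactly one solution `C` of `tan(CκT) = 2C/(C²−1)` in the open interval
`((2n−1)π/(2κT), nπ/(κT))` satisfying `0 ≤ C < 1`. -/
theorem lorentzian_eigenvalue_equation_unique_root
    (κ T : ℝ) (hκ : 0 < κ) (hT : 0 < T) (n : ℕ) (hn : 1 ≤ n)
    (hupper : (n : ℝ) < κ * T / π + 1 / 2) :
    ∃! C : ℝ,
      C ∈ Set.Ioo ((2 * (n : ℝ) - 1) * π / (2 * κ * T)) ((n : ℝ) * π / (κ * T)) ∧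
      0 ≤ C ∧ C < 1 ∧
      Real.tan (C * κ * T) = 2 * C / (C ^ 2 - 1) := by
  have hπ := Real.pi_pos
  have ha : 0 < κ * T := mul_pos hκ hT
  have hn1 : (1:ℝ) ≤ n := by exact_mod_cast hn
  set L := (2 * (n:ℝ) - 1) * π / (2 * κ * T) with hL_def
  set R := (n:ℝ) * π / (κ * T) with hR_def
  -- key arithmetic
  have hLa : L * (κ * T) = (2 * (n:ℝ) - 1) * π / 2 := by
    rw [hL_def, div_mul_eq_mul_div, div_eq_div_iff (by positivity) (by norm_num)]; ring
  have hRa : R * (κ * T) = (n:ℝ) * π := by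
    rw [hR_def, div_mul_cancel₀ _ ha.ne']
  have hupper' : (n:ℝ) * π < κ * T + π / 2 := by
    have h1 : (n:ℝ) * π < (κ * T / π + 1 / 2) * π := by nlinarith
    have h2 : (κ * T / π + 1 / 2) * π = κ * T + π / 2 := by field_simp
    linarith
  have hLpos : 0 < L := by
    apply div_pos (by nlinarith) (by positivity)
  have hL1 : L < 1 := by
    rw [hL_def, div_lt_one (by positivity)]
    nlinarith
  have hLR : L < R := by
    rw [hL_def, hR_def, div_lt_div_iff₀ (by positivity) ha]
    nlinarith
  set h : ℝ → ℝ := fun C => C * (κ * T) + 2 * Real.arctan C with hh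
  have hmono : StrictMono h := by
    intro x y hxy
    have h1 : Real.arctan x < Real.arctan y := Real.arctan_strictMono hxy
    have h2 : x * (κ * T) < y * (κ * T) := by nlinarith
    simp only [hh]; linarith
  have hcont : Continuous h := by
    exact (continuous_id.mul continuous_const).add (continuous_const.mul Real.continuous_arctan)
  -- tan of h-roots
  have key : ∀ C : ℝ, 0 ≤ C → C < 1 → h C = n * π →
      Real.tan (C * κ * T) = 2 * C / (C ^ 2 - 1) := by
    intro C hC0 hC1 hCeq
    have hCa : C * κ * T = -(2 * Real.arctan C) + n * π := by
      simp only [hh] at hCeq; ring_nf; ring_nf at hCeq; linarith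
    have hCsq : C ^ 2 < 1 := by nlinarith
    have hsq : C ^ 2 - 1 ≠ 0 := sub_ne_zero.mpr (ne_of_lt hCsq)
    have hsq' : 1 - C ^ 2 ≠ 0 := sub_ne_zero.mpr (ne_of_gt hCsq)
    rw [hCa, (Real.tan_periodic.nat_mul n) (-(2 * Real.arctan C)), Real.tan_neg,
      Real.tan_two_mul, Real.tan_arctan]
    field_simp
    ring
  have key2 : ∀ C : ℝ, C ∈ Set.Ioo L R → 0 ≤ C → C < 1 →
      Real.tan (C * κ * T) = 2 * C / (C ^ 2 - 1) → h C = n * π := by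
    intro C hmem hC0 hC1 htan
    have hCpos : 0 < C := hLpos.trans hmem.1
    have hCa1 : (2 * (n:ℝ) - 1) * π / 2 < C * (κ * T) := by
      calc (2 * (n:ℝ) - 1) * π / 2 = L * (κ * T) := hLa.symm
        _ < C * (κ * T) := mul_lt_mul_of_pos_right hmem.1 ha
    have hCa2 : C * (κ * T) < n * π := by
      calc C * (κ * T) < R * (κ * T) := mul_lt_mul_of_pos_right hmem.2 ha
        _ = n * π := hRa
    have harc1 : 0 < Real.arctan C := by
      have := Real.arctan_strictMono hCpos
      rwa [Real.arctan_zero] at this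
    have harc2 : Real.arctan C < π / 4 := by
      have := Real.arctan_strictMono hC1
      rwa [Real.arctan_one] at this
    have hy1 : 0 < (n:ℝ) * π - C * (κ * T) := by linarith
    have hy2 : (n:ℝ) * π - C * (κ * T) < π / 2 := by linarith
    have htan2 : Real.tan ((n:ℝ) * π - C * (κ * T)) = Real.tan (2 * Real.arctan C) := by
      have h1 : ((n:ℝ) * π - C * (κ * T)) = -(C * (κ * T)) + n * π := by ring
      rw [h1, (Real.tan_periodic.nat_mul n) (-(C * (κ * T))), Real.tan_neg]
      rw [Real.tan_two_mul, Real.tan_arctan]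
      have hCsq : C ^ 2 < 1 := by nlinarith
      have hsq : C ^ 2 - 1 ≠ 0 := sub_ne_zero.mpr (ne_of_lt hCsq)
      have hsq' : 1 - C ^ 2 ≠ 0 := sub_ne_zero.mpr (ne_of_gt hCsq)
      have he : C * κ * T = C * (κ * T) := by ring
      rw [← he, htan]
      field_simp
      ring
    have heq : (n:ℝ) * π - C * (κ * T) = 2 * Real.arctan C := by
      apply Real.injOn_tan _ _ htan2
      · constructor <;> [linarith; linarith]
      · constructor <;> [linarith; linarith]
    simp only [hh]; linarith
  -- existence via IVT
  set R' := min R 1 with hR'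
  have hLR' : L ≤ R' := le_min hLR.le hL1.le
  have hhL : h L < n * π := by
    have harcL : Real.arctan L < π / 4 := by
      have := Real.arctan_strictMono hL1
      rwa [Real.arctan_one] at this
    simp only [hh]
    rw [hLa]
    nlinarith
  have hhR' : (n:ℝ) * π < h R' := by
    rcases min_cases R 1 with ⟨he, hle⟩ | ⟨he, hlt⟩
    · rw [hR', he]
      have : 0 < Real.arctan R := by
        have := Real.arctan_strictMono (hLpos.trans hLR)
        rwa [Real.arctan_zero] at this
      simp only [hh]; rw [hRa]; linarith
    · rw [hR', he]
      simp only [hh]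
      rw [Real.arctan_one]
      nlinarith
  have hIVT := intermediate_value_Ioo hLR' (hcont.continuousOn)
  have hmem : (n:ℝ) * π ∈ Set.Ioo (h L) (h R') := ⟨hhL, hhR'⟩
  obtain ⟨C₀, hC₀mem, hC₀eq⟩ := hIVT hmem
  have hC₀R : C₀ < R := hC₀mem.2.trans_le (min_le_left _ _)
  have hC₀1 : C₀ < 1 := hC₀mem.2.trans_le (min_le_right _ _)
  have hC₀0 : 0 ≤ C₀ := (hLpos.trans hC₀mem.1).le
  refine ⟨C₀, ⟨⟨hC₀mem.1, hC₀R⟩, hC₀0, hC₀1, key C₀ hC₀0 hC₀1 hC₀eq⟩, ?_⟩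
  rintro C' ⟨hmem', hC'0, hC'1, htan'⟩
  have := key2 C' hmem' hC'0 hC'1 htan'
  exact hmono.injective (this.trans hC₀eq.symm)
end

section
/- For the Lorentzian transmission with η_max = 1, the number of eigenvalues λ of the windowed kernel exceeding 1/2 increases by one precisely at the times T = (2n−1)π/(2κ), n = 1, 2, ...; that is, the n-th solution C_n ∈ [0,1) of tan(CκT) = 2C/(C²−1) first exists when T > (2n−1)π/(2κ). -/
open Real

private lemma lorentzian_aux_cos (n : ℕ) (x : ℝ)
    (h1 : (2 * (n : ℝ) - 1) * π / 2 < x) (h2 : x < (n : ℝ) * π) :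
    0 < (-1 : ℝ) ^ n * Real.cos x := by
  have hπ := Real.pi_pos
  have hkey : Real.cos ((n : ℝ) * π - x) = (-1) ^ n * Real.cos x :=
    Real.cos_nat_mul_pi_sub x n
  rw [← hkey]
  apply Real.cos_pos_of_mem_Ioo
  constructor
  · nlinarith
  · nlinarith

set_option maxHeartbeats 1000000 in
/-- For the lossless Lorentzian transmission, the `n`-th quantum channel (the `n`-th
solution `C_n ∈ [0,1)` of `tan(CκT) = 2C/(C²−1)`, lying in the interval
`((2n−1)π/(2κT), nπ/(κT))`) first exists precisely when `T > (2n−1)π/(2κ)`. -/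
theorem lorentzian_channel_opening_time
    (κ T : ℝ) (hκ : 0 < κ) (hT : 0 < T) (n : ℕ) (hn : 1 ≤ n) :
    (∃ C : ℝ,
        C ∈ Set.Ico (0 : ℝ) 1 ∧
        C ∈ Set.Ioo ((2 * (n : ℝ) - 1) * π / (2 * κ * T)) ((n : ℝ) * π / (κ * T)) ∧
        Real.tan (C * κ * T) = 2 * C / (C ^ 2 - 1)) ↔
      (2 * (n : ℝ) - 1) * π / (2 * κ) < T := by
  have hπ := Real.pi_pos
  have hn1 : (1 : ℝ) ≤ (n : ℝ) := by exact_mod_cast hn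
  have hp : 0 < 2 * (n : ℝ) - 1 := by linarith
  set a : ℝ := (2 * (n : ℝ) - 1) * π / (2 * κ * T) with ha_def
  set b : ℝ := (n : ℝ) * π / (κ * T) with hb_def
  have hκT : 0 < κ * T := by positivity
  have h2κT : 0 < 2 * κ * T := by positivity
  have ha0 : 0 < a := by apply div_pos; positivity; exact h2κT
  constructor
  · rintro ⟨C, ⟨hC0, hC1⟩, ⟨hCa, hCb⟩, _⟩
    have haa : a < 1 := lt_trans hCa hC1
    rw [div_lt_one h2κT] at haa
    rw [div_lt_iff₀ (by positivity : (0:ℝ) < 2 * κ)]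
    nlinarith
  · intro hTn
    -- basic bounds
    have haa : a < 1 := by
      rw [div_lt_one h2κT]
      rw [div_lt_iff₀ (by positivity : (0:ℝ) < 2 * κ)] at hTn
      nlinarith
    have hab : a < b := by
      rw [ha_def, hb_def, div_lt_div_iff₀ h2κT hκT]
      nlinarith
    set b' : ℝ := min b 1 with hb'_def
    have hb'1 : b' ≤ 1 := min_le_right _ _
    have hb'b : b' ≤ b := min_le_left _ _
    have hab' : a < b' := lt_min hab haa
    set G : ℝ → ℝ := fun C =>
      (-1 : ℝ) ^ n * (Real.sin (C * κ * T) * (C ^ 2 - 1) - 2 * C * Real.cos (C * κ * T))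
      with hG_def
    have hcont : Continuous G := by fun_prop
    have hsq : ((-1 : ℝ) ^ n) * ((-1 : ℝ) ^ n) = 1 := by
      rw [← pow_add, ← two_mul, pow_mul]; norm_num
    -- value at a
    have haκT : a * κ * T = (n : ℝ) * π - π / 2 := by
      rw [ha_def]; field_simp
    have hGa : 0 < G a := by
      have hsin : Real.sin (a * κ * T) = -((-1 : ℝ) ^ n) := by
        rw [haκT, Real.sin_nat_mul_pi_sub, Real.sin_pi_div_two, mul_one]
      have hcos : Real.cos (a * κ * T) = 0 := by
        rw [haκT, Real.cos_nat_mul_pi_sub, Real.cos_pi_div_two, mul_zero]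
      have : G a = ((-1 : ℝ) ^ n * (-1 : ℝ) ^ n) * (1 - a ^ 2) := by
        rw [hG_def]; simp only [hsin, hcos]; ring
      rw [this, hsq, one_mul]; nlinarith
    -- value at b'
    have hGb' : G b' < 0 := by
      rcases le_or_gt b 1 with hb1 | hb1
      · have hbeq : b' = b := min_eq_left hb1
        have hbκT : b * κ * T = (n : ℝ) * π := by
          rw [hb_def]; field_simp
        have hsin : Real.sin (b * κ * T) = 0 := by rw [hbκT]; exact Real.sin_nat_mul_pi n
        have hcos : Real.cos (b * κ * T) = (-1 : ℝ) ^ n := by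
          rw [hbκT]; simpa using Real.cos_nat_mul_pi_sub 0 n
        have hb0 : 0 < b := lt_trans ha0 hab
        have : G b = ((-1 : ℝ) ^ n * (-1 : ℝ) ^ n) * (-(2 * b)) := by
          rw [hG_def]; simp only [hsin, hcos]; ring
        rw [hbeq, this, hsq, one_mul]; linarith
      · have hbeq : b' = 1 := min_eq_right hb1.le
        have h1 : (2 * (n : ℝ) - 1) * π / 2 < κ * T := by
          rw [div_lt_one h2κT] at haa
          nlinarith
        have h2 : κ * T < (n : ℝ) * π := by
          rw [hb_def, lt_div_iff₀ hκT] at hb1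
          nlinarith
        have hcos := lorentzian_aux_cos n (κ * T) h1 h2
        have : G 1 = -(2 * ((-1 : ℝ) ^ n * Real.cos (κ * T))) := by
          rw [hG_def]; norm_num; ring
        rw [hbeq, this]; linarith
    -- IVT
    have hIoo : (0 : ℝ) ∈ Set.Ioo (G b') (G a) := ⟨hGb', hGa⟩
    obtain ⟨c, hc, hGc⟩ :=
      intermediate_value_Ioo' hab'.le hcont.continuousOn hIoo
    have hc1 : c < 1 := lt_of_lt_of_le hc.2 hb'1
    have hc0 : 0 < c := lt_trans ha0 hc.1
    have hcb : c < b := lt_of_lt_of_le hc.2 hb'b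
    -- bounds on x = c κ T
    have hx1 : (2 * (n : ℝ) - 1) * π / 2 < c * κ * T := by
      have := mul_lt_mul_of_pos_right (mul_lt_mul_of_pos_right hc.1 hκ) hT
      calc (2 * (n : ℝ) - 1) * π / 2 = (n : ℝ) * π - π / 2 := by ring
        _ = a * κ * T := haκT.symm
        _ < c * κ * T := this
    have hx2 : c * κ * T < (n : ℝ) * π := by
      have hbκT : b * κ * T = (n : ℝ) * π := by rw [hb_def]; field_simp
      have := mul_lt_mul_of_pos_right (mul_lt_mul_of_pos_right hcb hκ) hT
      linarith [hbκT ▸ this]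
    have hcospos := lorentzian_aux_cos n (c * κ * T) hx1 hx2
    have hcosne : Real.cos (c * κ * T) ≠ 0 := by
      intro h; rw [h, mul_zero] at hcospos; exact lt_irrefl 0 hcospos
    have hc2 : c ^ 2 - 1 ≠ 0 := by intro h; nlinarith
    have hF : Real.sin (c * κ * T) * (c ^ 2 - 1) - 2 * c * Real.cos (c * κ * T) = 0 := by
      have hne : ((-1 : ℝ) ^ n) ≠ 0 := by
        intro h; rw [h, zero_mul] at hsq; norm_num at hsq
      have hGc' : (-1 : ℝ) ^ n *
          (Real.sin (c * κ * T) * (c ^ 2 - 1) - 2 * c * Real.cos (c * κ * T)) = 0 := hGc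
      exact (mul_eq_zero.mp hGc').resolve_left hne
    refine ⟨c, ⟨hc0.le, hc1⟩, ⟨hc.1, hcb⟩, ?_⟩
    rw [Real.tan_eq_sin_div_cos, div_eq_div_iff hcosne hc2]
    linarith
end
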